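/- Let X be an a×b grid in P^3 with 2 ≤ a ≤ b, let ℓ_1,…,ℓ_{ab} be the linear forms dual to the points of X, and let 1 ≤ d ≤ a−1. Then the artinian algebra R/(ℓ_1^d,…,ℓ_{ab}^d) has the Weak Lefschetz Property. -/

import Mathlib

/-- The linear form dual to a point of projective space with coordinate
vector `v`: `ℓ_v = v 0 • x_0 + ⋯ + v (n-1) • x_(n-1)`. -/
noncomputable def dualForm {n : ℕ} (k : Type) [Field k] (v : Fin n → k) :
    MvPolynomial (Fin n) k :=
  ∑ i, MvPolynomial.C (v i) * MvPolynomial.X i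

/-- `Λ_{X,d}`: the ideal generated by the `d`-th powers of the linear forms dual
to the points (given by coordinate vectors) in `X`. -/
noncomputable def powersIdeal {n : ℕ} (k : Type) [Field k]
    (X : Set (Fin n → k)) (d : ℕ) : Ideal (MvPolynomial (Fin n) k) :=
  Ideal.span ((fun v => dualForm k v ^ d) '' X)

/-- The degree-`t` graded component `[I]_t` of a homogeneous ideal, as a
`k`-subspace of the polynomial ring. -/
noncomputable def idealComp {n : ℕ} (k : Type) [Field k]
    (I : Ideal (MvPolynomial (Fin n) k)) (t : ℕ) :
    Submodule k (MvPolynomial (Fin n) k) :=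
  Submodule.restrictScalars k I ⊓ MvPolynomial.homogeneousSubmodule (Fin n) k t

/-- The degree-`t` graded component `[R/I]_t` of the quotient algebra, i.e. the image
of the space of degree-`t` homogeneous polynomials in the quotient. -/
noncomputable def quotComp {n : ℕ} (k : Type) [Field k]
    (I : Ideal (MvPolynomial (Fin n) k)) (t : ℕ) :
    Submodule k (MvPolynomial (Fin n) k ⧸ I) :=
  Submodule.map (Ideal.Quotient.mkₐ k I).toLinearMap
    (MvPolynomial.homogeneousSubmodule (Fin n) k t)

/-- The image of the multiplication map `×ℓ : [R/I]_s → R/I`. -/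
noncomputable def mulImage {n : ℕ} (k : Type) [Field k]
    (I : Ideal (MvPolynomial (Fin n) k)) (ℓ : MvPolynomial (Fin n) k) (s : ℕ) :
    Submodule k (MvPolynomial (Fin n) k ⧸ I) :=
  Submodule.map (LinearMap.mulLeft k (Ideal.Quotient.mk I ℓ)) (quotComp k I s)

/-- The multiplication map `×ℓ : [R/I]_s → [R/I]_t` has maximal rank: it is
injective or surjective. -/
def maxRankMulMap {n : ℕ} (k : Type) [Field k]
    (I : Ideal (MvPolynomial (Fin n) k)) (ℓ : MvPolynomial (Fin n) k) (s t : ℕ) : Prop :=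
  (∀ x ∈ quotComp k I s, Ideal.Quotient.mk I ℓ * x = 0 → x = 0) ∨
  (∀ y ∈ quotComp k I t, ∃ x ∈ quotComp k I s, Ideal.Quotient.mk I ℓ * x = y)

/-- The graded algebra `R/I` has the Weak Lefschetz Property: there is a linear form `ℓ`
such that every multiplication map `×ℓ : [R/I]_{t} → [R/I]_{t+1}` has maximal rank. -/
def hasWLP {n : ℕ} (k : Type) [Field k] (I : Ideal (MvPolynomial (Fin n) k)) : Prop :=
  ∃ ℓ : MvPolynomial (Fin n) k, ℓ.IsHomogeneous 1 ∧
    ∀ t : ℕ, maxRankMulMap k I ℓ t (t + 1)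

/-- The homogeneous vanishing ideal of a set `Y` of (coordinate vectors of) projective
points: all polynomials vanishing on the affine cone over `Y`. -/
noncomputable def vanishingIdealCone {n : ℕ} (k : Type) [Field k]
    (Y : Set (Fin n → k)) : Ideal (MvPolynomial (Fin n) k) where
  carrier := {h | ∀ v ∈ Y, ∀ c : k, MvPolynomial.eval (c • v) h = 0}
  zero_mem' := by intro v hv c; simp
  add_mem' := by intro f g hf hg v hv c; simp [hf v hv c, hg v hv c]
  smul_mem' := by intro f h hh v hv c; simp [smul_eq_mul, hh v hv c]

/-- An `a × b` grid in `P³`: the `ab` pairwise intersection points of `a` lines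
`λ_1, …, λ_a` in one ruling of a smooth quadric surface `Q ⊂ P³` with `b` lines
`μ_1, …, μ_b` in the other ruling.  Points of `P³` are recorded by coordinate
vectors in `k⁴`, and lines by `2`-dimensional subspaces of `k⁴` (their affine cones). -/
structure Grid (k : Type) [Field k] (a b : ℕ) where
  /-- the defining quadratic form of the smooth quadric -/
  Q : MvPolynomial (Fin 4) k
  homQ : Q.IsHomogeneous 2
  /-- the quadric is smooth: the partial derivatives have no common projective zero -/
  smoothQ : ∀ v : Fin 4 → k, (∀ i, MvPolynomial.eval v (MvPolynomial.pderiv i Q) = 0) → v = 0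
  /-- the lines of the first ruling -/
  lam : Fin a → Submodule k (Fin 4 → k)
  /-- the lines of the second ruling -/
  mu : Fin b → Submodule k (Fin 4 → k)
  lam_rank : ∀ i, Module.finrank k (lam i) = 2
  mu_rank : ∀ j, Module.finrank k (mu j) = 2
  lam_on : ∀ i, ∀ v ∈ lam i, MvPolynomial.eval v Q = 0
  mu_on : ∀ j, ∀ v ∈ mu j, MvPolynomial.eval v Q = 0
  /-- lines of the same ruling are pairwise disjoint -/
  lam_disj : ∀ i i', i ≠ i' → lam i ⊓ lam i' = ⊥
  mu_disj : ∀ j j', j ≠ j' → mu j ⊓ mu j' = ⊥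
  /-- lines of different rulings meet in exactly one point -/
  meet_rank : ∀ i j, Module.finrank k ↥(lam i ⊓ mu j) = 1
  /-- a coordinate vector for the grid point `P_{i,j} = λ_i ∩ μ_j` -/
  P : Fin a → Fin b → (Fin 4 → k)
  P_ne : ∀ i j, P i j ≠ 0
  P_mem : ∀ i j, P i j ∈ lam i ⊓ mu j

/-- The set of (coordinate vectors of) the points of a grid. -/
def Grid.pts {k : Type} [Field k] {a b : ℕ} (G : Grid k a b) : Set (Fin 4 → k) :=
  Set.range fun p : Fin a × Fin b => G.P p.1 p.2

/-- The differential operator `∂^m = ∏ᵢ (∂/∂xᵢ)^(m i)` associated to a monomial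
exponent vector `m`. -/
noncomputable def diffMonOp {n : ℕ} (k : Type) [Field k] (m : Fin n →₀ ℕ) :
    Module.End k (MvPolynomial (Fin n) k) :=
  (List.ofFn fun i : Fin n => ((MvPolynomial.pderiv i).toLinearMap ^ (m i))).prod

/-- `∂F/∂G`: the result of applying the differential operator
`G(∂/∂x_1, …, ∂/∂x_n)` to `F`. -/
noncomputable def diffOp {n : ℕ} (k : Type) [Field k]
    (G F : MvPolynomial (Fin n) k) : MvPolynomial (Fin n) k :=
  ∑ m ∈ G.support, MvPolynomial.coeff m G • diffMonOp k m F

/-- Projection of `P³` to `P²` determined (in coordinates) by an invertible matrix `M`: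
first move by `M`, then drop the last coordinate.  This is the projection from the point
with coordinate vector `M⁻¹ e₄` to the plane `{x₄ = 0}` (in the moved coordinates). -/
noncomputable def projPoint (k : Type) [Field k] (M : Matrix (Fin 4) (Fin 4) k)
    (v : Fin 4 → k) : Fin 3 → k :=
  fun i => M.mulVec v i.castSucc

/-- The image of a set of points of `P³` under the projection determined by `M`. -/
noncomputable def projSet (k : Type) [Field k] (M : Matrix (Fin 4) (Fin 4) k)
    (X : Set (Fin 4 → k)) : Set (Fin 3 → k) :=
  projPoint k M '' X

/-- A set of points of `P²` is a complete intersection of type `(a,b)`: its homogeneous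
vanishing ideal is generated by a form of degree `a` and a form of degree `b`. -/
def IsCIofType (k : Type) [Field k] (a b : ℕ) (Y : Set (Fin 3 → k)) : Prop :=
  ∃ f g : MvPolynomial (Fin 3) k, f.IsHomogeneous a ∧ g.IsHomogeneous b ∧
    vanishingIdealCone k Y = Ideal.span {f, g}

/-- `X ⊂ P³` is `(a,b)`-geproci: its projection from a general point to a general plane is a
complete intersection of type `(a,b)`.  Genericity is expressed by a nonzero polynomial `F`
in the entries of the matrix `M` encoding the projection. -/
def IsGeproci (k : Type) [Field k] (a b : ℕ) (X : Set (Fin 4 → k)) : Prop :=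
  ∃ F : MvPolynomial (Fin 4 × Fin 4) k, F ≠ 0 ∧
    ∀ M : Matrix (Fin 4) (Fin 4) k, IsUnit M.det →
      MvPolynomial.eval (fun p => M p.1 p.2) F ≠ 0 → IsCIofType k a b (projSet k M X)

/-- The irrelevant maximal ideal `(x_1, …, x_n)`. -/
noncomputable def irrelevantIdeal {n : ℕ} (k : Type) [Field k] :
    Ideal (MvPolynomial (Fin n) k) :=
  Ideal.span (Set.range MvPolynomial.X)

/-- The saturation `J^sat` of a homogeneous ideal with respect to the irrelevant
maximal ideal. -/
noncomputable def satIdeal {n : ℕ} (k : Type) [Field k]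
    (J : Ideal (MvPolynomial (Fin n) k)) : Ideal (MvPolynomial (Fin n) k) :=
  ⨆ m : ℕ, Submodule.colon J ((irrelevantIdeal k ^ m : Ideal (MvPolynomial (Fin n) k)) : Set (MvPolynomial (Fin n) k))

/-- The `d`-th symbolic power of the ideal of the (reduced) set of points of a grid:
the intersection of the `d`-th powers of the ideals of the individual points. -/
noncomputable def Grid.symbolicPower {k : Type} [Field k] {a b : ℕ}
    (G : Grid k a b) (d : ℕ) : Ideal (MvPolynomial (Fin 4) k) :=
  ⨅ p : Fin a × Fin b, (vanishingIdealCone k {G.P p.1 p.2}) ^ d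


section Aux

open MvPolynomial

variable {k : Type} [Field k] {n : ℕ}

lemma dualForm_add (v w : Fin n → k) :
    dualForm k (v + w) = dualForm k v + dualForm k w := by
  simp [dualForm, Finset.sum_add_distrib, add_mul]

lemma dualForm_smul (c : k) (v : Fin n → k) :
    dualForm k (c • v) = MvPolynomial.C c * dualForm k v := by
  simp [dualForm, Finset.mul_sum, mul_assoc]

lemma dualForm_isHomogeneous (v : Fin n → k) :
    (dualForm k v).IsHomogeneous 1 := by
  apply MvPolynomial.IsHomogeneous.sum
  intro i _
  simpa using (MvPolynomial.isHomogeneous_X k i).C_mul (v i)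

lemma coeff_dualForm (v : Fin n → k) (i : Fin n) :
    MvPolynomial.coeff (Finsupp.single i 1) (dualForm k v) = v i := by
  classical
  rw [dualForm]
  rw [MvPolynomial.coeff_sum]
  rw [Finset.sum_eq_single i]
  · simp [MvPolynomial.coeff_C_mul, MvPolynomial.coeff_X]
  · intro j _ hj
    have : Finsupp.single i (1:ℕ) ≠ Finsupp.single j 1 := by
      intro h
      exact hj (Finsupp.single_left_injective one_ne_zero h).symm
    simp [MvPolynomial.coeff_C_mul, MvPolynomial.coeff_X', this.symm]
  · simp

lemma dualForm_eq_zero_iff (v : Fin n → k) : dualForm k v = 0 ↔ v = 0 := by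
  constructor
  · intro h
    funext i
    have := coeff_dualForm v i
    rw [h] at this
    simpa using this.symm
  · rintro rfl
    simp [dualForm]

lemma eval_dualForm (w v : Fin n → k) :
    MvPolynomial.eval w (dualForm k v) = ∑ i, v i * w i := by
  simp [dualForm]

end Aux

section Aux2

open MvPolynomial

variable {k : Type} [Field k] {n : ℕ}

lemma degree_add' (a b : Fin n →₀ ℕ) :
    Finsupp.degree (a + b) = Finsupp.degree a + Finsupp.degree b := by
  simp only [Finsupp.degree_eq_weight_one, map_add]

lemma powersIdeal_coeff_eq_zero {X : Set (Fin n → k)} {d : ℕ} {f : MvPolynomial (Fin n) k}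
    (hf : f ∈ powersIdeal k X d) :
    ∀ m : Fin n →₀ ℕ, Finsupp.degree m < d → MvPolynomial.coeff m f = 0 := by
  classical
  refine Submodule.span_induction ?_ ?_ ?_ ?_ hf
  · rintro g ⟨v, -, rfl⟩ m hm
    have hg : (dualForm k v ^ d).IsHomogeneous d := by
      simpa using (dualForm_isHomogeneous (k := k) v).pow d
    exact hg.coeff_eq_zero (Nat.ne_of_lt hm)
  · intro m _; simp
  · intro x y _ _ hx hy m hm
    simp [MvPolynomial.coeff_add, hx m hm, hy m hm]
  · intro r x _ hx m hm
    rw [smul_eq_mul, MvPolynomial.coeff_mul]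
    apply Finset.sum_eq_zero
    rintro ⟨m1, m2⟩ hmem
    rw [Finset.HasAntidiagonal.mem_antidiagonal] at hmem
    have h2 : Finsupp.degree m2 < d := by
      have : Finsupp.degree m1 + Finsupp.degree m2 = Finsupp.degree m := by
        rw [← degree_add', hmem]
      omega
    rw [hx m2 h2, mul_zero]

lemma powersIdeal_eq_zero_of_isHomogeneous_lt {X : Set (Fin n → k)} {d e : ℕ}
    {f : MvPolynomial (Fin n) k} (hf : f ∈ powersIdeal k X d)
    (hhom : f.IsHomogeneous e) (he : e < d) : f = 0 := by
  ext m
  rw [MvPolynomial.coeff_zero]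
  by_cases hc : Finsupp.degree m = e
  · exact powersIdeal_coeff_eq_zero hf m (hc ▸ he)
  · exact hhom.coeff_eq_zero hc

lemma homogeneousComponent_mem_powersIdeal {X : Set (Fin n → k)} {d : ℕ}
    {f : MvPolynomial (Fin n) k} (hf : f ∈ powersIdeal k X d) (j : ℕ) :
    MvPolynomial.homogeneousComponent j f ∈ powersIdeal k X d := by
  classical
  revert j
  refine Submodule.span_induction ?_ ?_ ?_ ?_ hf
  · rintro g ⟨v, hv, rfl⟩ j
    have hg : (dualForm k v ^ d) ∈ homogeneousSubmodule (Fin n) k d := by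
      rw [mem_homogeneousSubmodule]
      simpa using (dualForm_isHomogeneous (k := k) v).pow d
    rw [MvPolynomial.homogeneousComponent_of_mem hg]
    split
    · exact Ideal.subset_span ⟨v, hv, rfl⟩
    · simp
  · intro j; simp
  · intro x y _ _ hx hy j
    rw [map_add]
    exact Ideal.add_mem _ (hx j) (hy j)
  · intro r x _ hx j
    rw [smul_eq_mul]
    have hdec : r * x = ∑ i ∈ Finset.range (r.totalDegree + 1),
        ∑ q ∈ Finset.range (x.totalDegree + 1),
        homogeneousComponent i r * homogeneousComponent q x := by
      rw [← Finset.sum_mul_sum, MvPolynomial.sum_homogeneousComponent,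
        MvPolynomial.sum_homogeneousComponent]
    rw [hdec, map_sum]
    apply Ideal.sum_mem
    intro i _
    rw [map_sum]
    apply Ideal.sum_mem
    intro q _
    have hmem : homogeneousComponent i r * homogeneousComponent q x ∈
        homogeneousSubmodule (Fin n) k (i + q) := by
      rw [mem_homogeneousSubmodule]
      exact (homogeneousComponent_isHomogeneous i r).mul
        (homogeneousComponent_isHomogeneous q x)
    rw [MvPolynomial.homogeneousComponent_of_mem hmem]
    split
    · exact Ideal.mul_mem_left _ _ (hx q)
    · simp

lemma homogeneousComponent_mul_homog {p r : MvPolynomial (Fin n) k} {e : ℕ}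
    (hp : p.IsHomogeneous e) (j : ℕ) :
    MvPolynomial.homogeneousComponent (e + j) (p * r)
      = p * MvPolynomial.homogeneousComponent j r := by
  classical
  conv_lhs => rw [← MvPolynomial.sum_homogeneousComponent r]
  rw [Finset.mul_sum, map_sum]
  have hterm : ∀ i, MvPolynomial.homogeneousComponent (e + j) (p * homogeneousComponent i r)
      = if i = j then p * homogeneousComponent i r else 0 := by
    intro i
    have hmem : p * homogeneousComponent i r ∈ homogeneousSubmodule (Fin n) k (e + i) := by
      rw [mem_homogeneousSubmodule]
      exact hp.mul (homogeneousComponent_isHomogeneous i r)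
    rw [MvPolynomial.homogeneousComponent_of_mem hmem]
    by_cases h : i = j
    · simp [h]
    · have : e + j ≠ e + i := by omega
      simp [this, h, Ne.symm h]
  simp_rw [hterm]
  rw [Finset.sum_ite_eq' (Finset.range (r.totalDegree + 1))]
  split
  · rfl
  · rename_i hj
    rw [Finset.mem_range, not_lt] at hj
    rw [MvPolynomial.homogeneousComponent_eq_zero _ _ (by omega), mul_zero]

end Aux2

section LinePoly

open MvPolynomial

variable {k : Type} [Field k] {n : ℕ}

lemma lam_C_mul (lam : MvPolynomial (Fin n) k →ₗ[k] k) (c : k) (u : MvPolynomial (Fin n) k) :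
    lam (MvPolynomial.C c * u) = c * lam u := by
  rw [← MvPolynomial.smul_eq_C_mul, map_smul, smul_eq_mul]

lemma lam_smul_pow (lam : MvPolynomial (Fin n) k →ₗ[k] k) (d : ℕ) (c : k) (v : Fin n → k) :
    lam (dualForm k (c • v) ^ d) = c ^ d * lam (dualForm k v ^ d) := by
  rw [dualForm_smul, mul_pow, ← MvPolynomial.C_pow, lam_C_mul]

/-- The univariate polynomial whose value at `t` is `lam ((ℓ_p + t ℓ_q)^d)`. -/
noncomputable def linePoly (lam : MvPolynomial (Fin n) k →ₗ[k] k) (d : ℕ) (p q : Fin n → k) :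
    Polynomial k :=
  ∑ j ∈ Finset.range (d + 1),
    Polynomial.C (lam (dualForm k p ^ j * dualForm k q ^ (d - j)
      * (d.choose j : MvPolynomial (Fin n) k))) * Polynomial.X ^ (d - j)

lemma linePoly_eval (lam : MvPolynomial (Fin n) k →ₗ[k] k) (d : ℕ) (p q : Fin n → k) (t : k) :
    (linePoly lam d p q).eval t = lam (dualForm k (p + t • q) ^ d) := by
  rw [dualForm_add, dualForm_smul, add_pow, map_sum, linePoly, Polynomial.eval_finset_sum]
  apply Finset.sum_congr rfl
  intro j hj
  rw [Polynomial.eval_mul, Polynomial.eval_C, Polynomial.eval_pow, Polynomial.eval_X]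
  have harg : dualForm k p ^ j * (MvPolynomial.C t * dualForm k q) ^ (d - j)
        * (d.choose j : MvPolynomial (Fin n) k)
      = MvPolynomial.C (t ^ (d - j)) * (dualForm k p ^ j * dualForm k q ^ (d - j)
        * (d.choose j : MvPolynomial (Fin n) k)) := by
    rw [mul_pow, MvPolynomial.C_pow]
    ring
  rw [harg, lam_C_mul, mul_comm]

lemma linePoly_coeff_of_gt (lam : MvPolynomial (Fin n) k →ₗ[k] k) (d : ℕ) (p q : Fin n → k)
    {e : ℕ} (he : d < e) : (linePoly lam d p q).coeff e = 0 := by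
  rw [linePoly, Polynomial.finset_sum_coeff]
  apply Finset.sum_eq_zero
  intro j _
  rw [Polynomial.coeff_C_mul, Polynomial.coeff_X_pow]
  have : e ≠ d - j := by omega
  simp [this]

lemma linePoly_natDegree_le (lam : MvPolynomial (Fin n) k →ₗ[k] k) (d : ℕ) (p q : Fin n → k) :
    (linePoly lam d p q).natDegree ≤ d :=
  Polynomial.natDegree_le_iff_coeff_eq_zero.mpr fun _ hN => linePoly_coeff_of_gt lam d p q hN

lemma linePoly_coeff_d (lam : MvPolynomial (Fin n) k →ₗ[k] k) (d : ℕ) (p q : Fin n → k) :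
    (linePoly lam d p q).coeff d = lam (dualForm k q ^ d) := by
  rw [linePoly, Polynomial.finset_sum_coeff]
  rw [Finset.sum_eq_single 0]
  · simp
  · intro j hj hj0
    rw [Finset.mem_range] at hj
    rw [Polynomial.coeff_C_mul, Polynomial.coeff_X_pow]
    have : d ≠ d - j := by omega
    simp [this]
  · simp

lemma linePoly_eval_zero (lam : MvPolynomial (Fin n) k →ₗ[k] k) (d : ℕ) (p q : Fin n → k) :
    (linePoly lam d p q).eval 0 = lam (dualForm k p ^ d) := by
  have := linePoly_eval lam d p q 0
  simpa using this

end LinePoly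

section PowersSpan

open MvPolynomial

lemma degree_eq_sum_univ {n : ℕ} (m : Fin n →₀ ℕ) : Finsupp.degree m = ∑ i, m i := by
  rw [Finsupp.degree]
  exact Finset.sum_subset (Finset.subset_univ _)
    (fun i _ hi => Finsupp.notMem_support_iff.mp hi)

lemma prod_X_pow_univ {n : ℕ} {R' : Type*} [CommSemiring R'] (κ : Fin n →₀ ℕ) :
    (∏ i, (MvPolynomial.X i : MvPolynomial (Fin n) R') ^ κ i)
      = MvPolynomial.monomial κ 1 := by
  rw [← MvPolynomial.prod_X_pow_eq_monomial]
  exact (Finset.prod_subset (Finset.subset_univ _)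
    (fun i _ hi => by rw [Finsupp.notMem_support_iff.mp hi, pow_zero])).symm

variable {k : Type} [Field k] [CharZero k] {n : ℕ}

lemma lam_monomial_eq_zero_of_powers (lam : MvPolynomial (Fin n) k →ₗ[k] k) (d : ℕ)
    (h : ∀ v : Fin n → k, lam (dualForm k v ^ d) = 0)
    {m : Fin n →₀ ℕ} (hm : Finsupp.degree m = d) :
    lam (MvPolynomial.monomial m 1) = 0 := by
  classical
  set R := MvPolynomial (Fin n) k with hR
  set E : MvPolynomial (Fin n) R :=
    (∑ i, MvPolynomial.C (MvPolynomial.X i) * MvPolynomial.X i) ^ d with hE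
  have hmmem : ⇑m ∈ Finset.piAntidiag Finset.univ d := by
    rw [Finset.mem_piAntidiag]
    exact ⟨by rw [← degree_eq_sum_univ, hm], fun i _ => Finset.mem_univ i⟩
  -- expansion of E
  have hexp : E = ∑ κ' ∈ Finset.piAntidiag Finset.univ d,
      MvPolynomial.monomial (Finsupp.equivFunOnFinite.symm κ')
        ((Nat.multinomial Finset.univ κ' : R)
        * MvPolynomial.monomial (Finsupp.equivFunOnFinite.symm κ') (1 : k)) := by
    rw [hE, Finset.sum_pow_eq_sum_piAntidiag]
    apply Finset.sum_congr rfl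
    intro κ' _
    set κ : Fin n →₀ ℕ := Finsupp.equivFunOnFinite.symm κ' with hκ
    have hκi : ∀ i, κ' i = κ i := fun i => rfl
    have hprod : (∏ i, (MvPolynomial.C (MvPolynomial.X i : R)
          * MvPolynomial.X i) ^ (κ' i : ℕ))
        = MvPolynomial.C (MvPolynomial.monomial κ (1 : k))
          * MvPolynomial.monomial κ (1 : R) := by
      simp_rw [mul_pow]
      rw [Finset.prod_mul_distrib]
      have h1 : (∏ i, ((MvPolynomial.C (MvPolynomial.X i : R) :
            MvPolynomial (Fin n) R)) ^ (κ' i : ℕ))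
          = (MvPolynomial.C (MvPolynomial.monomial κ (1 : k) : R) :
            MvPolynomial (Fin n) R) := by
        rw [← prod_X_pow_univ (R' := k) κ]
        rw [map_prod]
        apply Finset.prod_congr rfl
        intro i _
        rw [map_pow, hκi]
      have h2' : (∏ i, (MvPolynomial.X i : MvPolynomial (Fin n) R) ^ (κ' i : ℕ))
          = MvPolynomial.monomial κ (1 : R) := by
        rw [← prod_X_pow_univ (R' := R) κ]
        exact Finset.prod_congr rfl (fun i _ => by rw [hκi])
      rw [h1, h2']
    rw [hprod]
    rw [← mul_assoc]
    have h2 : ((Nat.multinomial Finset.univ κ' : ℕ) : MvPolynomial (Fin n) R)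
        = MvPolynomial.C ((Nat.multinomial Finset.univ κ' : ℕ) : R) := by
      rw [map_natCast (MvPolynomial.C : R →+* MvPolynomial (Fin n) R)]
    rw [h2, ← map_mul, MvPolynomial.C_mul_monomial, mul_one]
  have hcoeffE : MvPolynomial.coeff m E
      = (Nat.multinomial Finset.univ ⇑m : R) * MvPolynomial.monomial m (1 : k) := by
    rw [hexp, MvPolynomial.coeff_sum]
    rw [Finset.sum_eq_single_of_mem ⇑m hmmem]
    · rw [Finsupp.equivFunOnFinite_symm_coe, MvPolynomial.coeff_monomial, if_pos rfl]
    · intro κ' _ hne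
      rw [MvPolynomial.coeff_monomial, if_neg]
      intro heq
      apply hne
      have := congrArg (fun f => Finsupp.equivFunOnFinite f) heq
      exact (by simpa using this : κ' = Finsupp.equivFunOnFinite m)
  -- the polynomial with coefficients lam (coeff · E)
  set Gp : MvPolynomial (Fin n) k :=
    ∑ m' ∈ E.support, MvPolynomial.monomial m' (lam (MvPolynomial.coeff m' E)) with hGp
  have hevalE : ∀ v : Fin n → k,
      MvPolynomial.eval (fun i => (MvPolynomial.C (v i) : R)) E = dualForm k v ^ d := by
    intro v
    rw [hE, map_pow, map_sum, dualForm]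
    congr 1
    apply Finset.sum_congr rfl
    intro i _
    rw [map_mul, MvPolynomial.eval_C, MvPolynomial.eval_X, mul_comm]
  have hGpeval : ∀ v : Fin n → k, MvPolynomial.eval v Gp = 0 := by
    intro v
    have hlhs : MvPolynomial.eval v Gp = ∑ m' ∈ E.support,
        lam (MvPolynomial.coeff m' E) * ∏ i ∈ m'.support, v i ^ m' i := by
      rw [hGp, map_sum]
      apply Finset.sum_congr rfl
      intro m' _
      rw [MvPolynomial.eval_monomial]
      rfl
    have hrhs : lam (MvPolynomial.eval (fun i => (MvPolynomial.C (v i) : R)) E)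
        = ∑ m' ∈ E.support,
          lam (MvPolynomial.coeff m' E) * ∏ i ∈ m'.support, v i ^ m' i := by
      rw [MvPolynomial.eval_eq, map_sum]
      apply Finset.sum_congr rfl
      intro m' _
      have hC : (∏ i ∈ m'.support, (MvPolynomial.C (v i) : R) ^ m' i)
          = MvPolynomial.C (∏ i ∈ m'.support, v i ^ m' i) := by
        rw [map_prod]
        apply Finset.prod_congr rfl
        intro i _
        rw [map_pow]
      rw [hC, mul_comm, lam_C_mul, mul_comm]
    rw [hlhs, ← hrhs, hevalE, h v]
  have hGp0 : Gp = 0 := by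
    apply MvPolynomial.funext
    intro x
    rw [hGpeval x, map_zero]
  have hlamcoeff : lam (MvPolynomial.coeff m E) = 0 := by
    by_cases hmem : m ∈ E.support
    · have : MvPolynomial.coeff m Gp = 0 := by rw [hGp0, MvPolynomial.coeff_zero]
      rw [hGp, MvPolynomial.coeff_sum] at this
      rw [Finset.sum_eq_single_of_mem m hmem
        (fun κ' _ hne => by rw [MvPolynomial.coeff_monomial, if_neg hne])] at this
      rwa [MvPolynomial.coeff_monomial, if_pos rfl] at this
    · rw [MvPolynomial.notMem_support_iff.mp hmem, map_zero]
  rw [hcoeffE] at hlamcoeff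
  have hcast : ((Nat.multinomial Finset.univ ⇑m : ℕ) : R)
      = MvPolynomial.C ((Nat.multinomial Finset.univ ⇑m : ℕ) : k) :=
    (map_natCast (MvPolynomial.C : k →+* R) _)
  rw [hcast, lam_C_mul] at hlamcoeff
  have hne : ((Nat.multinomial Finset.univ ⇑m : ℕ) : k) ≠ 0 := by
    have : Nat.multinomial Finset.univ ⇑m ≠ 0 := (Nat.multinomial_pos _ _).ne'
    exact_mod_cast this
  rcases mul_eq_zero.mp hlamcoeff with h' | h'
  · exact absurd h' hne
  · exact h'

end PowersSpan

section GridGeometry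

open MvPolynomial

variable {k : Type} [Field k]

lemma eval_zero_of_isHomogeneous {n : ℕ} {Q : MvPolynomial (Fin n) k} {e : ℕ}
    (hQ : Q.IsHomogeneous e) (he : e ≠ 0) : MvPolynomial.eval (0 : Fin n → k) Q = 0 := by
  rw [MvPolynomial.eval_eq]
  apply Finset.sum_eq_zero
  intro m hm
  have hdeg : Finsupp.degree m = e := by
    rw [Finsupp.degree_eq_weight_one]
    exact hQ (MvPolynomial.mem_support_iff.mp hm)
  have hne : m ≠ 0 := by
    intro h0
    rw [h0, map_zero] at hdeg
    exact he hdeg.symm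
  obtain ⟨i, hi⟩ := Finsupp.support_nonempty_iff.mpr hne
  rw [Finset.prod_eq_zero hi, mul_zero]
  have : m i ≠ 0 := Finsupp.mem_support_iff.mp hi
  simp [zero_pow this]

lemma isHomog_dual_prod {n : ℕ} (v w : Fin n → k) (i j : ℕ) (c : k) :
    (dualForm k v ^ i * dualForm k w ^ j * MvPolynomial.C c).IsHomogeneous (i + j) := by
  have h := (((dualForm_isHomogeneous (k := k) v).pow i).mul
    ((dualForm_isHomogeneous (k := k) w).pow j)).mul (MvPolynomial.isHomogeneous_C (Fin n) c)
  simpa using h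

variable {a b : ℕ}

lemma grid_smul_ne (G : Grid k a b) (i : Fin a) {j j' : Fin b} (hjj' : j ≠ j') (c : k) :
    c • G.P i j ≠ G.P i j' := by
  intro h
  have h1 : G.P i j' ∈ G.mu j := h ▸ Submodule.smul_mem _ c (G.P_mem i j).2
  have h2 : G.P i j' ∈ G.mu j ⊓ G.mu j' := ⟨h1, (G.P_mem i j').2⟩
  rw [G.mu_disj j j' hjj'] at h2
  exact G.P_ne i j' h2

lemma grid_span_pair (G : Grid k a b) (i : Fin a) {j j' : Fin b} (hjj' : j ≠ j') :
    Submodule.span k (Set.range ![G.P i j, G.P i j']) = G.lam i := by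
  have hle : Submodule.span k (Set.range ![G.P i j, G.P i j']) ≤ G.lam i := by
    rw [Submodule.span_le]
    rintro x ⟨m, rfl⟩
    fin_cases m
    · exact (G.P_mem i j).1
    · exact (G.P_mem i j').1
  have hli : LinearIndependent k ![G.P i j, G.P i j'] := by
    rw [LinearIndependent.pair_iff]
    intro s t hst
    have hs : s • G.P i j = (-t) • G.P i j' := by
      rw [neg_smul]
      exact eq_neg_of_add_eq_zero_left hst
    have hmem : s • G.P i j ∈ G.mu j ⊓ G.mu j' :=
      ⟨Submodule.smul_mem _ s (G.P_mem i j).2,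
        hs ▸ Submodule.smul_mem _ (-t) (G.P_mem i j').2⟩
    rw [G.mu_disj j j' hjj'] at hmem
    have hs0 : s = 0 := by
      rcases smul_eq_zero.mp hmem with h | h
      · exact h
      · exact absurd h (G.P_ne i j)
    refine ⟨hs0, ?_⟩
    rw [hs0, zero_smul, zero_add] at hst
    rcases smul_eq_zero.mp hst with h | h
    · exact h
    · exact absurd h (G.P_ne i j')
  apply Submodule.eq_of_le_of_finrank_le hle
  rw [G.lam_rank i, finrank_span_eq_card hli]
  simp

lemma grid_z_notin_lam (G : Grid k a b) {z : Fin 4 → k}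
    (hz : MvPolynomial.eval z G.Q ≠ 0) (i : Fin a) : z ∉ G.lam i :=
  fun h => hz (G.lam_on i z h)

lemma grid_plane_rank (G : Grid k a b) {z : Fin 4 → k}
    (hz : MvPolynomial.eval z G.Q ≠ 0) (i : Fin a) :
    Module.finrank k ↥(G.lam i ⊔ Submodule.span k {z}) = 3 := by
  have hz0 : z ≠ 0 := by
    intro h
    exact hz (h ▸ eval_zero_of_isHomogeneous G.homQ (by norm_num))
  have hinf : G.lam i ⊓ Submodule.span k {z} = ⊥ := by
    rw [Submodule.eq_bot_iff]
    intro x hx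
    rw [Submodule.mem_inf] at hx
    obtain ⟨hx1, hx2⟩ := hx
    rw [Submodule.mem_span_singleton] at hx2
    obtain ⟨c, rfl⟩ := hx2
    rcases eq_or_ne c 0 with h | h
    · rw [h, zero_smul]
    · exfalso
      apply grid_z_notin_lam G hz i
      have hmem := Submodule.smul_mem (G.lam i) c⁻¹ hx1
      rwa [inv_smul_smul₀ h] at hmem
  have h1 := Submodule.finrank_sup_add_finrank_inf_eq (G.lam i) (Submodule.span k {z})
  rw [hinf, G.lam_rank i, finrank_span_singleton hz0, finrank_bot] at h1
  omega

lemma grid_exists_functional (G : Grid k a b) {z : Fin 4 → k}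
    (hz : MvPolynomial.eval z G.Q ≠ 0) (i : Fin a) :
    ∃ nf : (Fin 4 → k) →ₗ[k] k,
      LinearMap.ker nf = G.lam i ⊔ Submodule.span k {z} := by
  have hrank := grid_plane_rank G hz i
  set Ci := G.lam i ⊔ Submodule.span k {z} with hCi
  have hδ : Module.finrank k (Fin 4 → k) = 4 := by
    rw [Module.finrank_fin_fun]
  have hne : Ci ≠ ⊤ := by
    intro h
    rw [h, finrank_top, hδ] at hrank
    omega
  have : Nontrivial ((Fin 4 → k) ⧸ Ci) :=
    Submodule.Quotient.nontrivial_iff.mpr hne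
  obtain ⟨q, hq⟩ := exists_ne (0 : (Fin 4 → k) ⧸ Ci)
  have hmu : ∃ μ : Module.Dual k ((Fin 4 → k) ⧸ Ci), μ q ≠ 0 := by
    by_contra hcon
    push_neg at hcon
    exact hq ((Module.forall_dual_apply_eq_zero_iff k q).mp hcon)
  obtain ⟨μ, hμ⟩ := hmu
  refine ⟨μ.comp Ci.mkQ, ?_⟩
  have hle : Ci ≤ LinearMap.ker (μ.comp Ci.mkQ) := by
    intro x hx
    rw [LinearMap.mem_ker, LinearMap.comp_apply, Submodule.mkQ_apply,
      (Submodule.Quotient.mk_eq_zero Ci).mpr hx, map_zero]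
  obtain ⟨x, hx⟩ := Submodule.mkQ_surjective Ci q
  have hnfx : (μ.comp Ci.mkQ) x ≠ 0 := by
    rw [LinearMap.comp_apply, hx]
    exact hμ
  have hrange : LinearMap.range (μ.comp Ci.mkQ) = ⊤ := by
    rw [eq_top_iff]
    intro c _
    refine ⟨(c * ((μ.comp Ci.mkQ) x)⁻¹) • x, ?_⟩
    rw [map_smul, smul_eq_mul, mul_assoc, inv_mul_cancel₀ hnfx, mul_one]
  have hrk := LinearMap.finrank_range_add_finrank_ker (μ.comp Ci.mkQ)
  rw [hrange, finrank_top, hδ, Module.finrank_self] at hrk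
  have hker : Module.finrank k ↥(LinearMap.ker (μ.comp Ci.mkQ)) = 3 := by omega
  exact (Submodule.eq_of_le_of_finrank_le hle (by rw [hker, hrank])).symm

end GridGeometry

section MainVanishing

open MvPolynomial

variable {k : Type} [Field k]

lemma eval_dualForm_functional {n : ℕ} (f : (Fin n → k) →ₗ[k] k) (w : Fin n → k) :
    MvPolynomial.eval w (dualForm k (fun j => f (Pi.single j 1))) = f w := by
  rw [eval_dualForm]
  conv_rhs => rw [pi_eq_sum_univ w, map_sum]
  apply Finset.sum_congr rfl
  intro j _
  rw [map_smul, smul_eq_mul, mul_comm]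
  congr 1
  congr 1
  funext j'
  simp [Pi.single_apply, eq_comm]

lemma dualForm_functional_ne_zero {n : ℕ} {f : (Fin n → k) →ₗ[k] k} (hf : f ≠ 0) :
    dualForm k (fun j => f (Pi.single j 1)) ≠ 0 := by
  intro h0
  apply hf
  refine LinearMap.ext fun w => ?_
  rw [LinearMap.zero_apply, ← eval_dualForm_functional f w, h0, map_zero]

variable [CharZero k] {a b : ℕ}

lemma main_vanishing (G : Grid k a b) {z : Fin 4 → k}
    (hz : MvPolynomial.eval z G.Q ≠ 0)
    (d : ℕ) (hd1 : 1 ≤ d) (had : d + 1 ≤ a) (hab : a ≤ b)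
    (lam : MvPolynomial (Fin 4) k →ₗ[k] k)
    (H1 : ∀ g : MvPolynomial (Fin 4) k, g.IsHomogeneous (d - 1) →
      lam (dualForm k z * g) = 0)
    (H2 : ∀ p : Fin a, ∀ q : Fin b, lam (dualForm k (G.P p q) ^ d) = 0)
    (v : Fin 4 → k) : lam (dualForm k v ^ d) = 0 := by
  classical
  -- Step 1 : the cone property
  have hcone : ∀ (u : Fin 4 → k) (s : k),
      lam (dualForm k (u + s • z) ^ d) = lam (dualForm k u ^ d) := by
    intro u s
    rw [dualForm_add, dualForm_smul, add_pow, map_sum]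
    refine (Finset.sum_eq_single d ?_ ?_).trans ?_
    · intro j hj hjd
      rw [Finset.mem_range] at hj
      have hjlt : j < d := by omega
      obtain ⟨e, he⟩ : ∃ e, d - j = e + 1 := ⟨d - j - 1, by omega⟩
      have hc : ((d.choose j : ℕ) : MvPolynomial (Fin 4) k)
          = MvPolynomial.C ((d.choose j : ℕ) : k) := by
        rw [map_natCast]
      have harg : dualForm k u ^ j * (MvPolynomial.C s * dualForm k z) ^ (d - j)
            * ((d.choose j : ℕ) : MvPolynomial (Fin 4) k)
          = MvPolynomial.C (s ^ (d - j)) * (dualForm k z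
            * (dualForm k u ^ j * dualForm k z ^ e
              * MvPolynomial.C ((d.choose j : ℕ) : k))) := by
        rw [hc, MvPolynomial.C_pow, he]
        ring
      rw [harg, lam_C_mul]
      have hhom : (dualForm k u ^ j * dualForm k z ^ e
          * MvPolynomial.C ((d.choose j : ℕ) : k)).IsHomogeneous (d - 1) := by
        have h := isHomog_dual_prod u z j e ((d.choose j : ℕ) : k)
        have heq : j + e = d - 1 := by omega
        rwa [heq] at h
      rw [H1 _ hhom, mul_zero]
    · intro hd'
      exact absurd (Finset.self_mem_range_succ d) hd'
    · simp
  -- Step 2 : vanishing on the lines of the first ruling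
  have hline : ∀ i : Fin a, ∀ u ∈ G.lam i, lam (dualForm k u ^ d) = 0 := by
    intro i u hu
    have hb2 : 2 ≤ b := by omega
    have hj01 : (⟨0, by omega⟩ : Fin b) ≠ (⟨1, by omega⟩ : Fin b) := by
      intro h
      have := Fin.mk.injEq 0 (by omega : (0:ℕ) < b) 1 (by omega) ▸ h
      simp at h
    set p := G.P i ⟨0, by omega⟩ with hp
    set p' := G.P i ⟨1, by omega⟩ with hp'
    have hspan := grid_span_pair G i hj01
    have hrange : Set.range ![p, p'] = {p, p'} := by
      ext x
      constructor
      · rintro ⟨m, rfl⟩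
        fin_cases m
        · left; rfl
        · right; rfl
      · rintro (rfl | rfl)
        · exact ⟨0, rfl⟩
        · exact ⟨1, rfl⟩
    have hmemspan : ∀ x, x ∈ G.lam i → ∃ c1 c2 : k, c1 • p + c2 • p' = x := by
      intro x hx
      apply Submodule.mem_span_pair.mp
      rw [← hrange, hspan]
      exact hx
    have hcoord : ∀ j : Fin b, ∃ st : k × k, st.1 • p + st.2 • p' = G.P i j := by
      intro j
      obtain ⟨c1, c2, hc⟩ := hmemspan _ (G.P_mem i j).1
      exact ⟨(c1, c2), hc⟩
    choose st hst using hcoord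
    have hx0 : ∀ j : Fin b, j ≠ ⟨1, by omega⟩ → (st j).1 ≠ 0 := by
      intro j hj h0
      exact grid_smul_ne G i (Ne.symm hj) (st j).2
        (by rw [← hst j, h0, zero_smul, zero_add, hp'])
    have hdec : ∀ j : Fin b, (st j).1 ≠ 0 →
        G.P i j = (st j).1 • (p + ((st j).2 / (st j).1) • p') := by
      intro j hj
      rw [smul_add, smul_smul, mul_comm, div_mul_cancel₀ _ hj]
      exact (hst j).symm
    have hdeg : (linePoly lam d p p').natDegree ≤ d - 1 := by
      rw [Polynomial.natDegree_le_iff_coeff_eq_zero]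
      intro N hN
      rcases eq_or_lt_of_le (show d ≤ N by omega) with h | h
      · rw [← h, linePoly_coeff_d]
        exact H2 i _
      · exact linePoly_coeff_of_gt lam d p p' h
    have hroots : ∀ j : {j : Fin b // j ≠ (⟨1, by omega⟩ : Fin b)},
        (linePoly lam d p p').eval ((st j.1).2 / (st j.1).1) = 0 := by
      rintro ⟨j, hj⟩
      have hx := hx0 j hj
      have h2 := H2 i j
      rw [hdec j hx, lam_smul_pow] at h2
      rw [linePoly_eval]
      rcases mul_eq_zero.mp h2 with h | h
      · exact absurd h (pow_ne_zero d hx)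
      · exact h
    have hinj : Function.Injective (fun j : {j : Fin b // j ≠ (⟨1, by omega⟩ : Fin b)} =>
        (st j.1).2 / (st j.1).1) := by
      rintro ⟨j, hj⟩ ⟨j', hj'⟩ heq
      simp only at heq
      by_contra hne
      have hjj' : j ≠ j' := fun h => hne (Subtype.ext h)
      apply grid_smul_ne G i hjj' ((st j').1 / (st j).1)
      rw [hdec j (hx0 j hj), hdec j' (hx0 j' hj'), ← heq, smul_smul,
        div_mul_cancel₀ _ (hx0 j hj)]
    have hcard : (linePoly lam d p p').natDegree
        < Fintype.card {j : Fin b // j ≠ (⟨1, by omega⟩ : Fin b)} := by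
      have hcc : Fintype.card {j : Fin b // j ≠ (⟨1, by omega⟩ : Fin b)} = b - 1 := by
        have h1 := Fintype.card_subtype_compl (fun j : Fin b => j = (⟨1, by omega⟩ : Fin b))
        rw [Fintype.card_subtype_eq, Fintype.card_fin] at h1
        exact h1
      omega
    have hPl0 : linePoly lam d p p' = 0 :=
      Polynomial.eq_zero_of_natDegree_lt_card_of_eval_eq_zero _ hinj hroots hcard
    obtain ⟨c1, c2, hc⟩ := hmemspan u hu
    rcases eq_or_ne c1 0 with h1 | h1
    · have hu2 : u = c2 • p' := by rw [← hc, h1, zero_smul, zero_add]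
      rw [hu2, lam_smul_pow, hp', H2 i _, mul_zero]
    · have hu2 : u = c1 • (p + (c2 / c1) • p') := by
        rw [smul_add, smul_smul, mul_comm, div_mul_cancel₀ _ h1]
        exact hc.symm
      rw [hu2, lam_smul_pow, ← linePoly_eval, hPl0, Polynomial.eval_zero, mul_zero]
  -- Step 3 : vanishing on the planes spanned by the lines and z
  have hplane : ∀ i : Fin a, ∀ u ∈ G.lam i ⊔ Submodule.span k {z},
      lam (dualForm k u ^ d) = 0 := by
    intro i u hu
    rw [Submodule.mem_sup] at hu
    obtain ⟨w, hw, y, hy, rfl⟩ := hu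
    rw [Submodule.mem_span_singleton] at hy
    obtain ⟨s, rfl⟩ := hy
    rw [hcone w s]
    exact hline i w hw
  -- Step 4 : the linear functionals cutting out the planes
  choose nf hnf using fun i : Fin a => grid_exists_functional G hz i
  by_cases hbad : ∃ i : Fin a, nf i v = 0
  · obtain ⟨i, hi⟩ := hbad
    exact hplane i v (by rw [← hnf i]; exact LinearMap.mem_ker.mpr hi)
  push_neg at hbad
  have hker_ne : ∀ p : Fin a × Fin a, p.1 ≠ p.2 →
      (nf p.1 v) • nf p.2 - (nf p.2 v) • nf p.1 ≠ 0 := by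
    intro p hp h0
    rw [sub_eq_zero] at h0
    have hsmul : nf p.2 = ((nf p.2 v) / (nf p.1 v)) • nf p.1 := by
      calc nf p.2 = ((nf p.1 v)⁻¹ * (nf p.1 v)) • nf p.2 := by
            rw [inv_mul_cancel₀ (hbad p.1), one_smul]
        _ = (nf p.1 v)⁻¹ • ((nf p.1 v) • nf p.2) := by rw [mul_smul]
        _ = (nf p.1 v)⁻¹ • ((nf p.2 v) • nf p.1) := by rw [h0]
        _ = ((nf p.2 v) / (nf p.1 v)) • nf p.1 := by
            rw [← mul_smul, mul_comm, ← div_eq_mul_inv]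
    have hkereq : LinearMap.ker (nf p.2) = LinearMap.ker (nf p.1) := by
      rw [hsmul, LinearMap.ker_smul _ _ (div_ne_zero (hbad p.2) (hbad p.1))]
    have hC12 : G.lam p.2 ⊔ Submodule.span k {z} = G.lam p.1 ⊔ Submodule.span k {z} := by
      rw [← hnf p.1, ← hnf p.2, hkereq]
    have hsup_le : G.lam p.1 ⊔ G.lam p.2 ≤ G.lam p.1 ⊔ Submodule.span k {z} := by
      apply sup_le
      · exact le_sup_left
      · rw [← hC12]; exact le_sup_left
    have h4 : Module.finrank k ↥(G.lam p.1 ⊔ G.lam p.2) = 4 := by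
      have h := Submodule.finrank_sup_add_finrank_inf_eq (G.lam p.1) (G.lam p.2)
      rw [G.lam_disj p.1 p.2 hp, G.lam_rank, G.lam_rank, finrank_bot] at h
      omega
    have h3 := grid_plane_rank G hz p.1
    have hle := Submodule.finrank_mono hsup_le
    rw [h4, h3] at hle
    omega
  -- Step 5 : choose a good auxiliary direction w
  have hΦne : ((∏ i : Fin a, dualForm k (fun j => nf i (Pi.single j 1))) *
      ∏ p ∈ Finset.univ.offDiag, dualForm k (fun j =>
        ((nf p.1 v) • nf p.2 - (nf p.2 v) • nf p.1) (Pi.single j 1))) ≠ 0 := by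
    apply mul_ne_zero
    · rw [Finset.prod_ne_zero_iff]
      intro i _
      apply dualForm_functional_ne_zero
      intro h0
      exact hbad i (by rw [h0, LinearMap.zero_apply])
    · rw [Finset.prod_ne_zero_iff]
      intro p hp
      rw [Finset.mem_offDiag] at hp
      exact dualForm_functional_ne_zero (hker_ne p hp.2.2)
  have hwex : ∃ w : Fin 4 → k, MvPolynomial.eval w
      ((∏ i : Fin a, dualForm k (fun j => nf i (Pi.single j 1))) *
      ∏ p ∈ Finset.univ.offDiag, dualForm k (fun j =>
        ((nf p.1 v) • nf p.2 - (nf p.2 v) • nf p.1) (Pi.single j 1))) ≠ 0 := by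
    by_contra hcon
    push_neg at hcon
    apply hΦne
    apply MvPolynomial.funext
    intro x
    rw [hcon x, map_zero]
  obtain ⟨w, hwΦ⟩ := hwex
  rw [map_mul, map_prod, map_prod] at hwΦ
  simp only [eval_dualForm_functional] at hwΦ
  obtain ⟨hw1', hw2'⟩ := mul_ne_zero_iff.mp hwΦ
  rw [Finset.prod_ne_zero_iff] at hw1' hw2'
  have hw1 : ∀ i : Fin a, nf i w ≠ 0 := fun i => hw1' i (Finset.mem_univ i)
  have hw2 : ∀ p : Fin a × Fin a, p.1 ≠ p.2 →
      nf p.1 v * nf p.2 w - nf p.2 v * nf p.1 w ≠ 0 := by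
    intro p hp
    have := hw2' p (Finset.mem_offDiag.mpr ⟨Finset.mem_univ _, Finset.mem_univ _, hp⟩)
    simpa [LinearMap.sub_apply, LinearMap.smul_apply, smul_eq_mul] using this
  -- Step 6 : root counting along the line v + t w
  set t : Fin a → k := fun i => -(nf i v / nf i w) with ht
  have htroot : ∀ i, (linePoly lam d v w).eval (t i) = 0 := by
    intro i
    rw [linePoly_eval]
    apply hplane i
    rw [← hnf i]
    apply LinearMap.mem_ker.mpr
    rw [map_add, map_smul, smul_eq_mul, ht]
    simp only
    rw [neg_mul, div_mul_cancel₀ _ (hw1 i)]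
    ring
  have htinj : Function.Injective t := by
    intro i i' heq
    by_contra hne
    apply hw2 (i, i') hne
    rw [ht] at heq
    simp only [neg_inj] at heq
    have heq2 := (div_eq_div_iff (hw1 i) (hw1 i')).mp heq
    exact sub_eq_zero_of_eq heq2
  have hdeg2 : (linePoly lam d v w).natDegree < Fintype.card (Fin a) := by
    rw [Fintype.card_fin]
    have := linePoly_natDegree_le lam d v w
    omega
  have hPl2 := Polynomial.eq_zero_of_natDegree_lt_card_of_eval_eq_zero _ htinj htroot hdeg2
  have hfin := linePoly_eval_zero lam d v w
  rw [hPl2, Polynomial.eval_zero] at hfin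
  exact hfin.symm

end MainVanishing

section Assembly

set_option synthInstance.maxHeartbeats 1000000

open MvPolynomial

lemma exists_le_degree {n : ℕ} (m : Fin n →₀ ℕ) (d : ℕ) (hd : d ≤ Finsupp.degree m) :
    ∃ γ : Fin n →₀ ℕ, γ ≤ m ∧ Finsupp.degree γ = d := by
  induction d with
  | zero => exact ⟨0, zero_le, map_zero _⟩
  | succ d ih =>
    obtain ⟨γ, hle, hdeg⟩ := ih (by omega)
    have hne : γ ≠ m := by
      intro h
      rw [h] at hdeg
      omega
    have hex : ∃ i, γ i < m i := by
      by_contra hcon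
      push_neg at hcon
      apply hne
      apply le_antisymm hle
      rw [Finsupp.le_def]
      exact hcon
    obtain ⟨i, hi⟩ := hex
    refine ⟨γ + Finsupp.single i 1, ?_, ?_⟩
    · rw [Finsupp.le_def]
      intro j
      have hj := Finsupp.le_def.mp hle j
      simp only [Finsupp.add_apply, Finsupp.single_apply]
      split
      · rename_i hji
        subst hji
        omega
      · omega
    · rw [degree_add', hdeg]
      simp [Finsupp.degree_single]

variable {k : Type} [Field k] [CharZero k] {a b : ℕ}

lemma monomial_mem_U (G : Grid k a b) {z : Fin 4 → k}
    (hz : MvPolynomial.eval z G.Q ≠ 0)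
    (d : ℕ) (hd1 : 1 ≤ d) (had : d + 1 ≤ a) (hab : a ≤ b)
    {m : Fin 4 →₀ ℕ} (hm : Finsupp.degree m = d) :
    MvPolynomial.monomial m (1 : k) ∈
      Submodule.span k ((fun v => dualForm k v ^ d) '' G.pts) ⊔
        Submodule.map (LinearMap.mulLeft k (dualForm k z))
          (MvPolynomial.homogeneousSubmodule (Fin 4) k (d - 1)) := by
  set U := Submodule.span k ((fun v => dualForm k v ^ d) '' G.pts) ⊔
      Submodule.map (LinearMap.mulLeft k (dualForm k z))
        (MvPolynomial.homogeneousSubmodule (Fin 4) k (d - 1)) with hU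
  rw [← Submodule.Quotient.mk_eq_zero U]
  rw [← Module.forall_dual_apply_eq_zero_iff k]
  intro μ
  set lam : MvPolynomial (Fin 4) k →ₗ[k] k := μ.comp U.mkQ with hlam
  have hlamU : ∀ x ∈ U, lam x = 0 := by
    intro x hx
    rw [hlam, LinearMap.comp_apply, Submodule.mkQ_apply,
      (Submodule.Quotient.mk_eq_zero U).mpr hx, map_zero]
  have hmain : ∀ v : Fin 4 → k, lam (dualForm k v ^ d) = 0 := by
    apply main_vanishing G hz d hd1 had hab lam
    · intro g hg
      apply hlamU
      apply Submodule.mem_sup_right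
      exact ⟨g, (mem_homogeneousSubmodule _ _).mpr hg, rfl⟩
    · intro p q
      apply hlamU
      apply Submodule.mem_sup_left
      exact Submodule.subset_span ⟨G.P p q, ⟨(p, q), rfl⟩, rfl⟩
  exact lam_monomial_eq_zero_of_powers lam d hmain hm

theorem wlp_of_low_powers' (ha : 2 ≤ a) (hab : a ≤ b) (G : Grid k a b)
    (d : ℕ) (hd1 : 1 ≤ d) (hd2 : d ≤ a - 1) :
    hasWLP k (powersIdeal k G.pts d) := by
  classical
  have had : d + 1 ≤ a := by omega
  -- a point off the quadric
  have hQne : G.Q ≠ 0 := by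
    intro h
    have h0 := G.smoothQ (fun _ => 1) (fun i => by rw [h, map_zero, map_zero])
    have h1 := congrFun h0 0
    simp at h1
  have hzex : ∃ z : Fin 4 → k, MvPolynomial.eval z G.Q ≠ 0 := by
    by_contra hcon
    push_neg at hcon
    apply hQne
    apply MvPolynomial.funext
    intro x
    rw [hcon x, map_zero]
  obtain ⟨z, hz⟩ := hzex
  have hz0 : z ≠ 0 := fun h => hz (h ▸ eval_zero_of_isHomogeneous G.homQ (by norm_num))
  have hℓ0 : dualForm k z ≠ 0 := fun h => hz0 ((dualForm_eq_zero_iff z).mp h)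
  set I := powersIdeal k G.pts d with hI
  refine ⟨dualForm k z, dualForm_isHomogeneous z, ?_⟩
  intro t
  by_cases hcase : t + 1 < d
  · -- injectivity
    left
    rintro x ⟨h, hh, rfl⟩ hmul
    have hmk : (Ideal.Quotient.mkₐ k I).toLinearMap h = Ideal.Quotient.mk I h := rfl
    rw [hmk, ← map_mul] at hmul
    have hmem : dualForm k z * h ∈ I := Ideal.Quotient.eq_zero_iff_mem.mp hmul
    have hhom : (dualForm k z * h).IsHomogeneous (1 + t) :=
      (dualForm_isHomogeneous z).mul ((mem_homogeneousSubmodule _ _).mp hh)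
    have hzero : dualForm k z * h = 0 :=
      powersIdeal_eq_zero_of_isHomogeneous_lt hmem hhom (by omega)
    have hh0 : h = 0 := by
      rcases mul_eq_zero.mp hzero with h' | h'
      · exact absurd h' hℓ0
      · exact h'
    rw [hmk, hh0, map_zero]
  · -- surjectivity
    right
    have hd' : d ≤ t + 1 := by omega
    rintro y ⟨f, hf, rfl⟩
    -- every monomial of degree ≥ d lies in V = I + (ℓ)
    set V : Ideal (MvPolynomial (Fin 4) k) := I ⊔ Ideal.span {dualForm k z} with hV
    have hmonoV : ∀ m : Fin 4 →₀ ℕ, d ≤ Finsupp.degree m →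
        MvPolynomial.monomial m (1 : k) ∈ V := by
      intro m hmd
      obtain ⟨γ, hγle, hγdeg⟩ := exists_le_degree m d hmd
      have hγmem := monomial_mem_U G hz d hd1 had hab hγdeg
      have hγV : MvPolynomial.monomial γ (1 : k) ∈ V := by
        rcases Submodule.mem_sup.mp hγmem with ⟨u1, hu1, u2, hu2, heq⟩
        rw [← heq]
        apply Ideal.add_mem
        · apply Ideal.mem_sup_left
          have hsub : Submodule.span k ((fun v => dualForm k v ^ d) '' G.pts) ≤
              Submodule.restrictScalars k I := by
            apply Submodule.span_le.mpr
            intro x hx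
            exact Ideal.subset_span hx
          exact hsub hu1
        · apply Ideal.mem_sup_right
          obtain ⟨g, hg, rfl⟩ := hu2
          rw [LinearMap.mulLeft_apply]
          exact Ideal.mem_span_singleton.mpr (Dvd.intro _ rfl)
      have hfac : MvPolynomial.monomial m (1 : k)
          = MvPolynomial.monomial (m - γ) 1 * MvPolynomial.monomial γ 1 := by
        rw [MvPolynomial.monomial_mul, one_mul, tsub_add_cancel_of_le hγle]
      rw [hfac]
      exact Ideal.mul_mem_left _ _ hγV
    -- hence f itself lies in V
    have hfV : f ∈ V := by
      have hrepr : f = ∑ m ∈ f.support, MvPolynomial.monomial m (MvPolynomial.coeff m f) :=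
        (MvPolynomial.support_sum_monomial_coeff f).symm
      rw [hrepr]
      apply Ideal.sum_mem
      intro m hmm
      have hdegm : Finsupp.degree m = t + 1 := by
        rw [Finsupp.degree_eq_weight_one]
        exact ((mem_homogeneousSubmodule _ _).mp hf) (MvPolynomial.mem_support_iff.mp hmm)
      have h1 : MvPolynomial.monomial m (MvPolynomial.coeff m f)
          = MvPolynomial.C (MvPolynomial.coeff m f) * MvPolynomial.monomial m 1 := by
        rw [MvPolynomial.C_mul_monomial, mul_one]
      rw [h1]
      exact Ideal.mul_mem_left _ _ (hmonoV m (by omega))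
    -- decompose and take homogeneous components
    rcases Submodule.mem_sup.mp hfV with ⟨fI, hfI, w, hw, heq⟩
    obtain ⟨r, hr⟩ := Ideal.mem_span_singleton'.mp hw
    set g := MvPolynomial.homogeneousComponent t r with hg
    have hfcomp : MvPolynomial.homogeneousComponent (t + 1) f = f :=
      by rw [MvPolynomial.homogeneousComponent_of_mem hf, if_pos rfl]
    have hsplit : f = MvPolynomial.homogeneousComponent (t + 1) fI + dualForm k z * g := by
      conv_lhs => rw [← hfcomp]
      conv_lhs => rw [← heq]
      rw [map_add]
      congr 1
      have hcomm : w = dualForm k z * r := by rw [← hr, mul_comm]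
      rw [hcomm]
      have h2 : t + 1 = 1 + t := by omega
      rw [h2, homogeneousComponent_mul_homog (dualForm_isHomogeneous z) t]
    refine ⟨(Ideal.Quotient.mkₐ k I).toLinearMap g,
      ⟨g, (mem_homogeneousSubmodule _ _).mpr
        (MvPolynomial.homogeneousComponent_isHomogeneous t r), rfl⟩, ?_⟩
    have hmk : ∀ u, (Ideal.Quotient.mkₐ k I).toLinearMap u = Ideal.Quotient.mk I u :=
      fun _ => rfl
    rw [hmk, hmk, ← map_mul]
    rw [Ideal.Quotient.mk_eq_mk_iff_sub_mem]
    have : dualForm k z * g - f = -(MvPolynomial.homogeneousComponent (t + 1) fI) := by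
      rw [hsplit]; ring
    rw [this]
    exact Submodule.neg_mem _ (homogeneousComponent_mem_powersIdeal hfI (t + 1))

end Assembly

/-- Corollary 3.6: for an `a×b` grid with `2 ≤ a ≤ b` and `1 ≤ d ≤ a-1`, the algebra
`R/(ℓ_1^d, …, ℓ_{ab}^d)` has the Weak Lefschetz Property. -/
theorem wlp_of_low_powers (k : Type) [Field k] [CharZero k] [IsAlgClosed k]
    (a b : ℕ) (ha : 2 ≤ a) (hab : a ≤ b) (G : Grid k a b)
    (d : ℕ) (hd1 : 1 ≤ d) (hd2 : d ≤ a - 1) :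
    hasWLP k (powersIdeal k G.pts d) :=
  wlp_of_low_powers' ha hab G d hd1 hd2
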